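/- For every monoid M there exists a simple or 0-simple monoid N such that 𝔏(Val,CF,M) = 𝔏(Val,CF,N). -/

import Mathlib

/-- A context-free valence grammar over a monoid `M` with terminal alphabet `T`:
a context-free grammar (finitely many nonterminals, finitely many rules) each of whose
rules `(A, α, m)` rewrites the nonterminal `A` to the string `α ∈ (N ∪ T)*` and carries
the valence `m ∈ M`. -/
structure CFValenceGrammar (T : Type) (M : Type) [Monoid M] where
  NT : Type
  fintypeNT : Fintype NT
  start : NT
  rules : List (NT × List (NT ⊕ T) × M)

namespace CFValenceGrammar

variable {T M : Type} [Monoid M]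

/-- One derivation step on pairs (sentential form, accumulated valence). -/
def Produces (G : CFValenceGrammar T M)
    (x y : List (G.NT ⊕ T) × M) : Prop :=
  ∃ r ∈ G.rules, ∃ u v : List (G.NT ⊕ T),
    x.1 = u ++ Sum.inl r.1 :: v ∧ y.1 = u ++ r.2.1 ++ v ∧ y.2 = x.2 * r.2.2

/-- The derivation relation: the reflexive-transitive closure of `Produces`. -/
def Derives (G : CFValenceGrammar T M) :
    List (G.NT ⊕ T) × M → List (G.NT ⊕ T) × M → Prop :=
  Relation.ReflTransGen G.Produces

/-- The language generated by a context-free valence grammar: terminal words derivable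
from the start symbol by a valid derivation, i.e. one whose product of valences is the
identity. -/
def lang (G : CFValenceGrammar T M) : Language T :=
  { w | G.Derives ([Sum.inl G.start], 1) (w.map Sum.inr, 1) }

end CFValenceGrammar

/-- `𝔏(Val, CF, M)`: the family of languages over the terminal alphabet `T` generated by
context-free valence grammars over `M`. -/
def LValCF (T : Type) (M : Type) [Monoid M] : Set (Language T) :=
  { L | ∃ G : CFValenceGrammar T M, G.lang = L }

/-- An ideal of a monoid `M`: a nonempty subset `I` with `M I M ⊆ I`. -/
def IsMonoidIdeal {M : Type} [Monoid M] (I : Set M) : Prop :=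
  I.Nonempty ∧ ∀ a ∈ I, ∀ x y : M, x * a * y ∈ I

/-- A monoid is simple if it contains no proper ideal. -/
def IsSimpleMonoid (M : Type) [Monoid M] : Prop :=
  ∀ I : Set M, IsMonoidIdeal I → I = Set.univ

/-- `z` is a zero element of `M`. -/
def IsZeroElem {M : Type} [Monoid M] (z : M) : Prop :=
  ∀ m : M, z * m = z ∧ m * z = z

/-- A monoid with a zero element `z` is `0`-simple if its only ideals are `{z}` and `M`
itself, and not all products equal `z`. -/
def IsZeroSimpleMonoid (M : Type) [Monoid M] : Prop :=
  ∃ z : M, IsZeroElem z ∧ (∀ I : Set M, IsMonoidIdeal I → I = {z} ∨ I = Set.univ) ∧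
    ∃ a b : M, a * b ≠ z

section Aux

variable {T M N : Type} [Monoid M] [Monoid N]

/-- Map a valence grammar along a monoid hom on valences. -/
def mapG (f : M →* N) (G : CFValenceGrammar T M) : CFValenceGrammar T N where
  NT := G.NT
  fintypeNT := G.fintypeNT
  start := G.start
  rules := G.rules.map (fun r => (r.1, r.2.1, f r.2.2))

theorem derives_mapG (f : M →* N) (G : CFValenceGrammar T M)
    {p q : List (G.NT ⊕ T) × M} (h : G.Derives p q) :
    (mapG f G).Derives (p.1, f p.2) (q.1, f q.2) := by
  induction h with
  | refl => exact Relation.ReflTransGen.refl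
  | tail _ step ih =>
    refine ih.tail ?_
    obtain ⟨r, hr, u, v, hb, hc, hval⟩ := step
    refine ⟨(r.1, r.2.1, f r.2.2), List.mem_map_of_mem (f := fun r => (r.1, r.2.1, f r.2.2)) hr, u, v, hb, hc, ?_⟩
    simp [hval, map_mul]

theorem derives_of_mapG (f : M →* N) (G : CFValenceGrammar T M)
    {p q : List (G.NT ⊕ T) × N} (h : (mapG f G).Derives p q) :
    ∀ m : M, f m = p.2 → ∃ m', f m' = q.2 ∧ G.Derives (p.1, m) (q.1, m') := by
  induction h with
  | refl => exact fun m hm => ⟨m, hm, Relation.ReflTransGen.refl⟩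
  | tail _ step ih =>
    intro m hm
    obtain ⟨m', hm', hd⟩ := ih m hm
    obtain ⟨r', hr', u, v, hb, hc, hval⟩ := step
    replace hr' := List.mem_map.mp hr'
    obtain ⟨r, hr, rfl⟩ := hr'
    refine ⟨m' * r.2.2, ?_, hd.tail ⟨r, hr, u, v, hb, hc, rfl⟩⟩
    simp [map_mul, hm', hval]

theorem lang_mapG (f : M →* N) (hf : ∀ m, f m = 1 ↔ m = 1)
    (G : CFValenceGrammar T M) : (mapG f G).lang = G.lang := by
  ext w
  constructor
  · intro h
    obtain ⟨m', hm', hd⟩ := derives_of_mapG f G h 1 (by simp)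
    rw [(hf m').1 hm'] at hd
    exact hd
  · intro h
    have := derives_mapG f G (p := ([Sum.inl G.start], 1)) (q := (w.map Sum.inr, 1)) h
    show (mapG f G).Derives ([Sum.inl G.start], 1) (w.map Sum.inr, 1)
    simp only [map_one] at this
    exact this

theorem LValCF_eq_of_hom (f : M →* N) (hs : Function.Surjective f)
    (hf : ∀ m, f m = 1 ↔ m = 1) (T : Type) : LValCF T M = LValCF T N := by
  ext L
  constructor
  · rintro ⟨G, rfl⟩
    exact ⟨mapG f G, lang_mapG f hf G⟩
  · rintro ⟨H, rfl⟩
    refine ⟨⟨H.NT, H.fintypeNT, H.start,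
      H.rules.map (fun r => (r.1, r.2.1, Function.surjInv hs r.2.2))⟩, ?_⟩
    have heq : mapG f ⟨H.NT, H.fintypeNT, H.start,
        H.rules.map (fun r => (r.1, r.2.1, Function.surjInv hs r.2.2))⟩ = H := by
      obtain ⟨NT, i, st, rules⟩ := H
      have hfun : ((fun r : NT × List (NT ⊕ T) × M => (r.1, r.2.1, f r.2.2)) ∘
          (fun r : NT × List (NT ⊕ T) × N => (r.1, r.2.1, Function.surjInv hs r.2.2))) = id := by
        funext r
        simp [Function.comp, Function.surjInv_eq hs]
      simp only [mapG, List.map_map, hfun, List.map_id]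
    rw [← lang_mapG f hf, heq]

end Aux

/-- The Rees congruence on `M` identifying all elements that are not factors of `1`. -/
def reesCon (M : Type) [Monoid M] : Con M where
  r x y := x = y ∨ ((¬ ∃ a b, a * x * b = 1) ∧ (¬ ∃ a b, a * y * b = 1))
  iseqv := ⟨fun _ => Or.inl rfl,
    fun h => by
      rcases h with rfl | ⟨h1, h2⟩
      · exact Or.inl rfl
      · exact Or.inr ⟨h2, h1⟩,
    fun h h' => by
      rcases h with rfl | ⟨h1, h2⟩ <;> rcases h' with rfl | ⟨h3, h4⟩
      · exact Or.inl rfl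
      · exact Or.inr ⟨h3, h4⟩
      · exact Or.inr ⟨h1, h2⟩
      · exact Or.inr ⟨h1, h4⟩⟩
  mul' := by
    have key : ∀ x y : M, (¬ ∃ a b, a * x * b = 1) → ¬ ∃ a b, a * (x * y) * b = 1 := by
      rintro x y h ⟨a, b, hab⟩
      exact h ⟨a, y * b, by rw [← hab]; simp [mul_assoc]⟩
    have key' : ∀ x y : M, (¬ ∃ a b, a * y * b = 1) → ¬ ∃ a b, a * (x * y) * b = 1 := by
      rintro x y h ⟨a, b, hab⟩
      exact h ⟨a * x, b, by rw [← hab]; simp [mul_assoc]⟩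
    intro w x y z h h'
    rcases h with rfl | ⟨h1, h2⟩ <;> rcases h' with rfl | ⟨h3, h4⟩
    · exact Or.inl rfl
    · exact Or.inr ⟨key' _ _ h3, key' _ _ h4⟩
    · exact Or.inr ⟨key _ _ h1, key _ _ h2⟩
    · exact Or.inr ⟨key _ _ h1, key _ _ h2⟩

/-- For every monoid `M` there exists a simple or `0`-simple monoid `N`
such that `𝔏(Val, CF, M) = 𝔏(Val, CF, N)` (over every terminal alphabet). -/
theorem exists_simple_monoid_LValCF_eq (M : Type) [Monoid M] :
    ∃ (N : Type) (_i : Monoid N),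
      (IsSimpleMonoid N ∨ IsZeroSimpleMonoid N) ∧
        ∀ T : Type, LValCF T M = LValCF T N := by
  by_cases hall : ∀ m : M, ∃ a b, a * m * b = 1
  · -- M itself is simple
    refine ⟨M, ‹_›, Or.inl ?_, fun T => rfl⟩
    intro I ⟨⟨i, hi⟩, hI⟩
    obtain ⟨a, b, hab⟩ := hall i
    have h1 : (1 : M) ∈ I := hab ▸ hI i hi a b
    ext m
    simpa using (by simpa using hI 1 h1 m 1 : m ∈ I)
  · push_neg at hall
    obtain ⟨z, hz0⟩ := hall
    have hz : ¬ ∃ a b : M, a * z * b = 1 := by push_neg; exact hz0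
    set c := reesCon M with hc
    have hU1 : ∃ a b, a * (1 : M) * b = 1 := ⟨1, 1, by simp⟩
    have hrefl : ∀ m : M, (m : c.Quotient) = (1 : c.Quotient) ↔ m = 1 := by
      intro m
      rw [show (1 : c.Quotient) = ((1 : M) : c.Quotient) from rfl, Con.eq]
      constructor
      · rintro (h | ⟨h1, h2⟩)
        · exact h
        · exact absurd hU1 h2
      · rintro rfl; exact Or.inl rfl
    have hideal : ∀ m x y : M, ¬(∃ a b, a * m * b = 1) → ¬(∃ a b, a * (x * m * y) * b = 1) := by
      rintro m x y h ⟨a, b, hab⟩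
      exact h ⟨a * x, y * b, by rw [← hab]; simp [mul_assoc]⟩
    refine ⟨c.Quotient, inferInstance, Or.inr ⟨(z : c.Quotient), ?_, ?_, 1, 1, ?_⟩,
      fun T => LValCF_eq_of_hom c.mk' Con.mk'_surjective (fun m => hrefl m) T⟩
    · -- zero element
      intro n
      obtain ⟨m, rfl⟩ := Con.mk'_surjective (c := c) n
      constructor
      · show ((z * m : M) : c.Quotient) = (z : c.Quotient)
        rw [Con.eq]
        refine Or.inr ⟨?_, hz⟩
        have := hideal z 1 m hz
        simpa using this
      · show ((m * z : M) : c.Quotient) = (z : c.Quotient)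
        rw [Con.eq]
        refine Or.inr ⟨?_, hz⟩
        have := hideal z m 1 hz
        simpa using this
    · -- only ideals are {z} and univ
      intro I ⟨⟨i, hi⟩, hI⟩
      by_cases hIz : ∀ b ∈ I, b = (z : c.Quotient)
      · left
        ext b
        simp only [Set.mem_singleton_iff]
        constructor
        · exact hIz b
        · rintro rfl; exact (hIz i hi) ▸ hi
      · right
        push_neg at hIz
        obtain ⟨b, hb, hbz⟩ := hIz
        obtain ⟨a, rfl⟩ := Con.mk'_surjective (c := c) b
        have haU : ∃ x y, x * a * y = 1 := by
          by_contra h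
          exact hbz ((Con.eq c).mpr (Or.inr ⟨h, hz⟩))
        obtain ⟨x, y, hxy⟩ := haU
        have h1 : (1 : c.Quotient) ∈ I := by
          have hmem := hI _ hb (c.mk' x) (c.mk' y)
          have heq : c.mk' x * c.mk' a * c.mk' y = 1 := by
            rw [← map_mul, ← map_mul, hxy, map_one]
          rwa [heq] at hmem
        ext n
        simpa using (by simpa using hI 1 h1 n 1 : n ∈ I)
    · -- 1 * 1 ≠ z
      rw [one_mul]
      intro h
      have := (Con.eq c).mp (h.symm : (z : c.Quotient) = ((1 : M) : c.Quotient))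
      rcases this with h' | ⟨_, h2⟩
      · exact hz ⟨1, 1, by simp [h']⟩
      · exact h2 hU1
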